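/- If A(f) ≥ ε for some ε ∈ (0,1], then P[Â(f,Υ) = 0] ≤ exp(−⌊n/k⌋ · ε). -/

import Mathlib

open Finset
namespace Stmt5Aux
variable {α : Type*} [DecidableEq α]

def IsFree (k : ℕ) (f : Finset α → ℝ) (T : Finset α) : Prop :=
  ∀ S ⊆ T, S.card = k → f S = 0

noncomputable instance : ∀ (k : ℕ) (f : Finset α → ℝ), DecidablePred (IsFree k f) :=
  fun _ _ => Classical.decPred _

omit [DecidableEq α] in
lemma IsFree.mono {k : ℕ} {f : Finset α → ℝ} {T T' : Finset α}
    (h : IsFree k f T) (hsub : T' ⊆ T) : IsFree k f T' :=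
  fun S hS hc => h S (hS.trans hsub) hc

lemma card_supersets {X D : Finset α} (hD : D ⊆ X) {k : ℕ} (hjk : D.card ≤ k) :
    ((X.powersetCard k).filter (fun S => D ⊆ S)).card
      = (X.card - D.card).choose (k - D.card) := by
  rw [← Finset.card_sdiff_of_subset hD, ← Finset.card_powersetCard]
  apply Finset.card_bij (fun S _ => S \ D)
  · intro S hS
    simp only [mem_filter, mem_powersetCard] at hS ⊢
    obtain ⟨⟨hSX, hSc⟩, hDS⟩ := hS
    exact ⟨sdiff_subset_sdiff hSX (le_refl D), by rw [Finset.card_sdiff_of_subset hDS, hSc]⟩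
  · intro S₁ h₁ S₂ h₂ he
    simp only [mem_filter, mem_powersetCard] at h₁ h₂
    have e1 : S₁ = (S₁ \ D) ∪ D := (Finset.sdiff_union_of_subset h₁.2).symm
    have e2 : S₂ = (S₂ \ D) ∪ D := (Finset.sdiff_union_of_subset h₂.2).symm
    rw [e1, e2, he]
  · intro T hT
    simp only [mem_powersetCard] at hT
    obtain ⟨hTXD, hTc⟩ := hT
    have hdisj : Disjoint T D := by
      refine Finset.disjoint_left.2 fun a haT haD => ?_
      exact (Finset.mem_sdiff.1 (hTXD haT)).2 haD
    refine ⟨T ∪ D, ?_, ?_⟩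
    · simp only [mem_filter, mem_powersetCard]
      refine ⟨⟨?_, ?_⟩, subset_union_right⟩
      · exact union_subset (hTXD.trans sdiff_subset) hD
      · rw [Finset.card_union_of_disjoint hdisj, hTc]
        omega
    · rw [Finset.union_sdiff_cancel_right hdisj]

/-- Key claim: among `k`-subsets of `C \ U` (for free `U`), the proportion of
"bad" ones (those whose union with `U` is not free) is at least the global
density of witness sets. -/
lemma key_claim {k : ℕ} {f : Finset α → ℝ} (hk : 1 ≤ k) {C U : Finset α}
    (hU : U ⊆ C) (hfree : IsFree k f U) (hM : k ≤ (C \ U).card) :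
    (((C.powersetCard k).filter (fun W => f W = 1)).card : ℝ) * ((C \ U).card.choose k)
      ≤ (C.card.choose k : ℝ) *
        ((((C \ U).powersetCard k).filter (fun S => ¬ IsFree k f (U ∪ S))).card) := by
  set M := (C \ U).card with hMdef
  set Bs := (C.powersetCard k).filter (fun W => f W = 1) with hBs
  set bad := ((C \ U).powersetCard k).filter (fun S => ¬ IsFree k f (U ∪ S)) with hbad
  -- basic facts about W ∈ Bs
  have hWfacts : ∀ W ∈ Bs, W ⊆ C ∧ W.card = k ∧ f W = 1 := by
    intro W hW
    rw [hBs, mem_filter, mem_powersetCard] at hW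
    exact ⟨hW.1.1, hW.1.2, hW.2⟩
  have hjpos : ∀ W ∈ Bs, 1 ≤ (W \ U).card := by
    intro W hW
    obtain ⟨hWC, hWk, hW1⟩ := hWfacts W hW
    by_contra h
    have : W \ U = ∅ := Finset.card_eq_zero.1 (by omega)
    have hWU : W ⊆ U := by
      intro a ha
      by_contra haU
      exact absurd (Finset.mem_sdiff.2 ⟨ha, haU⟩) (by simp [this])
    have := hfree W hWU hWk
    rw [hW1] at this; exact one_ne_zero this
  have hjle : ∀ W ∈ Bs, (W \ U).card ≤ k := by
    intro W hW
    obtain ⟨hWC, hWk, hW1⟩ := hWfacts W hW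
    calc (W \ U).card ≤ W.card := Finset.card_le_card sdiff_subset
      _ = k := hWk
  -- Step A : for W ∈ Bs, the sets S ∈ bad containing W \ U are exactly the
  -- k-subsets of C \ U containing W \ U, and there are C(M-j, k-j) of them.
  have hcnt : ∀ W ∈ Bs, (bad.filter (fun S => W \ U ⊆ S)).card
      = (M - (W \ U).card).choose (k - (W \ U).card) := by
    intro W hW
    obtain ⟨hWC, hWk, hW1⟩ := hWfacts W hW
    have heq : bad.filter (fun S => W \ U ⊆ S)
        = ((C \ U).powersetCard k).filter (fun S => W \ U ⊆ S) := by
      rw [hbad, filter_filter]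
      apply filter_congr
      intro S hS
      rw [mem_powersetCard] at hS
      simp only [and_iff_right_iff_imp]
      intro hWS hfreeUS
      have hWUS : W ⊆ U ∪ S := by
        intro a ha
        rcases Finset.mem_union.2 (by
          by_cases haU : a ∈ U
          · exact Or.inl haU
          · exact Or.inr (hWS (Finset.mem_sdiff.2 ⟨ha, haU⟩))) with h' 
        exact (by
          by_cases haU : a ∈ U
          · exact Finset.mem_union.2 (Or.inl haU)
          · exact Finset.mem_union.2 (Or.inr (hWS (Finset.mem_sdiff.2 ⟨ha, haU⟩))))
      have := hfreeUS W hWUS hWk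
      rw [hW1] at this; exact one_ne_zero this
    rw [heq, card_supersets (by
      intro a ha
      rcases Finset.mem_sdiff.1 ha with ⟨haW, haU⟩
      exact Finset.mem_sdiff.2 ⟨hWC haW, haU⟩) (hjle W hW)]
  -- weight function
  set g : Finset α → ℝ := fun W =>
    (M.choose k : ℝ) / ((M - (W \ U).card).choose (k - (W \ U).card)) with hg
  have hgnonneg : ∀ W, 0 ≤ g W := fun W => by
    apply div_nonneg <;> positivity
  have hchoosene : ∀ j ≤ k, ((M - j).choose (k - j) : ℝ) ≠ 0 := by
    intro j hj
    have : 0 < (M - j).choose (k - j) := Nat.choose_pos (by omega)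
    positivity
  -- Per-S bound (Lemma B)
  have keyB : ∀ S ∈ (C \ U).powersetCard k,
      (∑ W ∈ Bs, if W \ U ⊆ S then g W else 0) ≤ (C.card.choose k : ℝ) := by
    intro S hS
    obtain ⟨hSsub, hScard⟩ := mem_powersetCard.1 hS
    rw [← sum_filter]
    have hsub2 : Bs.filter (fun W => W \ U ⊆ S) ⊆ (U ∪ S).powersetCard k := by
      intro W hW
      rw [mem_filter] at hW
      obtain ⟨hWC, hWk, _⟩ := hWfacts W hW.1
      refine mem_powersetCard.2 ⟨?_, hWk⟩
      intro a ha
      by_cases haU : a ∈ U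
      · exact Finset.mem_union.2 (Or.inl haU)
      · exact Finset.mem_union.2 (Or.inr (hW.2 (Finset.mem_sdiff.2 ⟨ha, haU⟩)))
    have hle1 := sum_le_sum_of_subset_of_nonneg hsub2 (fun W _ _ => hgnonneg W)
    refine hle1.trans ?_
    -- fiberwise over j = (W \ U).card
    have hmaps : ∀ W ∈ (U ∪ S).powersetCard k, (W \ U).card ∈ Finset.range (k+1) := by
      intro W hW
      obtain ⟨hWs, hWk⟩ := mem_powersetCard.1 hW
      exact Finset.mem_range.2 (by
        have := Finset.card_le_card (sdiff_subset : W \ U ⊆ W)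
        omega)
    rw [← Finset.sum_fiberwise_of_maps_to hmaps g]
    -- bound each fiber
    have hfibbound : ∀ j ∈ Finset.range (k+1),
        (∑ W ∈ ((U ∪ S).powersetCard k).filter (fun W => (W \ U).card = j), g W)
          ≤ (M.choose j : ℝ) * (U.card.choose (k - j)) := by
      intro j hj
      have hjk : j ≤ k := by simpa using Nat.lt_succ_iff.1 (Finset.mem_range.1 hj)
      have hgval : ∀ W ∈ ((U ∪ S).powersetCard k).filter (fun W => (W \ U).card = j),
          g W = (M.choose k : ℝ) / ((M - j).choose (k - j)) := by
        intro W hW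
        show (M.choose k : ℝ) / ((M - (W \ U).card).choose (k - (W \ U).card)) = _
        rw [(Finset.mem_filter.1 hW).2]
      rw [Finset.sum_congr rfl hgval, Finset.sum_const, nsmul_eq_mul]
      -- fiber card ≤ C(k,j) * C(u,k-j)
      have hdisjUS : Disjoint U S := by
        refine Finset.disjoint_left.2 fun a haU haS => ?_
        exact (Finset.mem_sdiff.1 (hSsub haS)).2 haU
      have hcard : (((U ∪ S).powersetCard k).filter (fun W => (W \ U).card = j)).card
          ≤ (S.powersetCard j ×ˢ U.powersetCard (k - j)).card := by
        apply Finset.card_le_card_of_injOn (fun W => (W ∩ S, W ∩ U))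
        · intro W hW; simp only [Finset.mem_coe] at hW ⊢
          rw [mem_filter, mem_powersetCard] at hW
          obtain ⟨⟨hWsub, hWk⟩, hWj⟩ := hW
          have hWS : W ∩ S = W \ U := by
            ext a
            simp only [Finset.mem_inter, Finset.mem_sdiff]
            constructor
            · rintro ⟨haW, haS⟩
              exact ⟨haW, fun haU => Finset.disjoint_left.1 hdisjUS haU haS⟩
            · rintro ⟨haW, haU⟩
              rcases Finset.mem_union.1 (hWsub haW) with h | h
              · exact absurd h haU
              · exact ⟨haW, h⟩
          have hWUcard : (W ∩ U).card = k - j := by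
            have h1 := Finset.card_inter_add_card_sdiff W U
            rw [hWj] at h1
            omega
          refine Finset.mem_product.2 ⟨mem_powersetCard.2 ⟨Finset.inter_subset_right, ?_⟩,
            mem_powersetCard.2 ⟨Finset.inter_subset_right, hWUcard⟩⟩
          rw [hWS, hWj]
        · intro W₁ h₁ W₂ h₂ he
          rw [Finset.mem_coe, mem_filter, mem_powersetCard] at h₁ h₂
          have e1 : W₁ = W₁ ∩ U ∪ W₁ ∩ S := by
            rw [← Finset.inter_union_distrib_left]
            exact (Finset.inter_eq_left.2 h₁.1.1).symm
          have e2 : W₂ = W₂ ∩ U ∪ W₂ ∩ S := by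
            rw [← Finset.inter_union_distrib_left]
            exact (Finset.inter_eq_left.2 h₂.1.1).symm
          obtain ⟨hpS, hpU⟩ : W₁ ∩ S = W₂ ∩ S ∧ W₁ ∩ U = W₂ ∩ U := by
            simpa [Prod.ext_iff] using he
          rw [e1, e2, hpS, hpU]
      have hcard' : ((((U ∪ S).powersetCard k).filter (fun W => (W \ U).card = j)).card : ℝ)
          ≤ (k.choose j : ℝ) * (U.card.choose (k - j)) := by
        have := hcard
        rw [Finset.card_product, Finset.card_powersetCard, Finset.card_powersetCard, hScard] at this
        exact_mod_cast this
      -- combine: card * (C(M,k)/C(M-j,k-j)) ≤ C(k,j)C(u,k-j) * C(M,k)/C(M-j,k-j) = C(M,j)C(u,k-j)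
      have hident : (k.choose j : ℝ) * (M.choose k) = (M.choose j : ℝ) * ((M - j).choose (k - j)) := by
        have h2 : M.choose k * k.choose j = M.choose j * ((M - j).choose (k - j)) :=
          Nat.choose_mul (n := M) hjk
        have h3 : ((M.choose k * k.choose j : ℕ) : ℝ)
            = ((M.choose j * ((M - j).choose (k - j)) : ℕ) : ℝ) := by rw [h2]
        push_cast at h3
        linarith [h3]
      have hne := hchoosene j hjk
      calc (((((U ∪ S).powersetCard k).filter (fun W => (W \ U).card = j)).card : ℝ))
            * ((M.choose k : ℝ) / ((M - j).choose (k - j)))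
          ≤ ((k.choose j : ℝ) * (U.card.choose (k - j)))
            * ((M.choose k : ℝ) / ((M - j).choose (k - j))) := by
            apply mul_le_mul_of_nonneg_right hcard'
            positivity
        _ = (M.choose j : ℝ) * (U.card.choose (k - j)) := by
            field_simp
            linear_combination (((U.card).choose (k - j) : ℝ)) * hident
    refine (Finset.sum_le_sum hfibbound).trans ?_
    -- Vandermonde
    have hNMu : C.card = M + U.card := by
      have := Finset.card_sdiff_of_subset hU
      have h2 := Finset.card_le_card hU
      omega
    rw [hNMu]
    have hvdm : ((M + U.card).choose k : ℝ)
        = ∑ j ∈ Finset.range (k+1), (M.choose j : ℝ) * (U.card.choose (k - j)) := by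
      have := Nat.add_choose_eq M U.card k
      rw [Finset.Nat.sum_antidiagonal_eq_sum_range_succ (fun a b => M.choose a * U.card.choose b)] at this
      exact_mod_cast congrArg (Nat.cast : ℕ → ℝ) this
    rw [hvdm]
  -- main chain
  have hchain : (Bs.card : ℝ) * (M.choose k) ≤ (bad.card : ℝ) * (C.card.choose k) := by
    calc (Bs.card : ℝ) * (M.choose k)
        = ∑ _W ∈ Bs, (M.choose k : ℝ) := by rw [Finset.sum_const, nsmul_eq_mul]
      _ = ∑ W ∈ Bs, ((bad.filter (fun S => W \ U ⊆ S)).card : ℝ) * g W := by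
          apply Finset.sum_congr rfl
          intro W hW
          rw [hcnt W hW, hg]
          rw [mul_div_cancel₀]
          exact hchoosene _ (hjle W hW)
      _ = ∑ W ∈ Bs, ∑ S ∈ bad, (if W \ U ⊆ S then g W else 0) := by
          apply Finset.sum_congr rfl
          intro W hW
          rw [← sum_filter, Finset.sum_const, nsmul_eq_mul]
      _ = ∑ S ∈ bad, ∑ W ∈ Bs, (if W \ U ⊆ S then g W else 0) := Finset.sum_comm
      _ ≤ ∑ S ∈ bad, (C.card.choose k : ℝ) := by
          apply Finset.sum_le_sum
          intro S hS
          exact keyB S (Finset.mem_of_mem_filter S hS)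
      _ = (bad.card : ℝ) * (C.card.choose k) := by rw [Finset.sum_const, nsmul_eq_mul]
  linarith [hchain]


/-- Pair counting: each free `j`-extension of `U` contains `C(j,k)` free
`k`-extensions, grouped by the `k`-extension. -/
lemma step_count {k : ℕ} {f : Finset α → ℝ} {C U : Finset α} {j : ℕ} (hkj : k ≤ j) :
    (((C \ U).powersetCard j).filter (fun T => IsFree k f (U ∪ T))).card * (j.choose k)
      ≤ ∑ S ∈ ((C \ U).powersetCard k).filter (fun S => IsFree k f (U ∪ S)),
          (((C \ (U ∪ S)).powersetCard (j - k)).filter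
            (fun T => IsFree k f ((U ∪ S) ∪ T))).card := by
  classical
  set Fj := ((C \ U).powersetCard j).filter (fun T => IsFree k f (U ∪ T)) with hFj
  set FE := ((C \ U).powersetCard k).filter (fun S => IsFree k f (U ∪ S)) with hFE
  have hTfacts : ∀ T ∈ Fj, T ⊆ C \ U ∧ T.card = j ∧ IsFree k f (U ∪ T) := by
    intro T hT
    rw [hFj, mem_filter, mem_powersetCard] at hT
    exact ⟨hT.1.1, hT.1.2, hT.2⟩
  have h1 : Fj.card * (j.choose k) = ∑ T ∈ Fj, (FE.filter (fun S => S ⊆ T)).card := by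
    rw [Finset.card_eq_sum_ones Fj, Finset.sum_mul, one_mul]
    apply Finset.sum_congr rfl
    intro T hT
    obtain ⟨hTsub, hTcard, hTfree⟩ := hTfacts T hT
    have hset : FE.filter (fun S => S ⊆ T) = T.powersetCard k := by
      ext S
      rw [mem_filter, hFE, mem_filter, mem_powersetCard, mem_powersetCard]
      constructor
      · rintro ⟨⟨⟨_, hSk⟩, _⟩, hST⟩
        exact ⟨hST, hSk⟩
      · rintro ⟨hST, hSk⟩
        refine ⟨⟨⟨hST.trans hTsub, hSk⟩, ?_⟩, hST⟩
        exact hTfree.mono (Finset.union_subset_union_right hST)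
    rw [hset, Finset.card_powersetCard, hTcard]
  rw [h1]
  have h2 : ∑ T ∈ Fj, (FE.filter (fun S => S ⊆ T)).card
      = ∑ S ∈ FE, (Fj.filter (fun T => S ⊆ T)).card := by
    simp only [Finset.card_filter]
    exact Finset.sum_comm
  rw [h2]
  apply Finset.sum_le_sum
  intro S hS
  rw [hFE, mem_filter, mem_powersetCard] at hS
  obtain ⟨⟨hSsub, hSk⟩, hSfree⟩ := hS
  apply Finset.card_le_card_of_injOn (fun T => T \ S)
  · intro T hT
    rw [Finset.mem_coe, mem_filter] at hT
    obtain ⟨hTsub, hTcard, hTfree⟩ := hTfacts T hT.1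
    have hST := hT.2
    rw [Finset.mem_coe, mem_filter, mem_powersetCard]
    refine ⟨⟨?_, ?_⟩, ?_⟩
    · intro a ha
      rcases Finset.mem_sdiff.1 ha with ⟨haT, haS⟩
      rcases Finset.mem_sdiff.1 (hTsub haT) with ⟨haC, haU⟩
      exact Finset.mem_sdiff.2 ⟨haC, fun h => (Finset.mem_union.1 h).elim haU haS⟩
    · rw [Finset.card_sdiff_of_subset hST, hTcard, hSk]
    · have : (U ∪ S) ∪ (T \ S) = U ∪ T := by
        rw [Finset.union_assoc, Finset.union_sdiff_of_subset hST]
      rw [this]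
      exact hTfree
  · intro T₁ h₁ T₂ h₂ he
    rw [Finset.mem_coe, mem_filter] at h₁ h₂
    have e1 : T₁ = S ∪ (T₁ \ S) := by rw [Finset.union_sdiff_of_subset h₁.2]
    have e2 : T₂ = S ∪ (T₂ \ S) := by rw [Finset.union_sdiff_of_subset h₂.2]
    have he' : T₁ \ S = T₂ \ S := he
    rw [e1, e2, he']

/-- Main induction: the number of free `j`-extensions of a free set `U` is at
most `(1-ε')^(j/k)` times the total number of `j`-subsets. -/
lemma main_ind {k : ℕ} (hk : 1 ≤ k) {f : Finset α → ℝ} {C : Finset α} {ε' : ℝ}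
    (hε : ε' = (((C.powersetCard k).filter (fun W => f W = 1)).card : ℝ) / (C.card.choose k)) :
    ∀ j U, U ⊆ C → IsFree k f U → j ≤ (C \ U).card →
      ((((C \ U).powersetCard j).filter (fun T => IsFree k f (U ∪ T))).card : ℝ)
        ≤ (1 - ε') ^ (j / k) * ((C \ U).card.choose j) := by
  have hε'0 : 0 ≤ ε' := by
    rw [hε]; positivity
  have hε'1 : ε' ≤ 1 := by
    rw [hε]
    rcases Nat.eq_zero_or_pos (C.card.choose k) with h | h
    · rw [h]; norm_num
    · rw [div_le_one (by exact_mod_cast h)]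
      have := Finset.card_le_card (Finset.filter_subset (fun W => f W = 1) (C.powersetCard k))
      rw [Finset.card_powersetCard] at this
      exact_mod_cast this
  intro j
  induction j using Nat.strong_induction_on with
  | _ j ih =>
    intro U hU hfree hjM
    by_cases hjk : j < k
    · rw [Nat.div_eq_of_lt hjk, pow_zero, one_mul]
      have := Finset.card_le_card
        (Finset.filter_subset (fun T => IsFree k f (U ∪ T)) ((C \ U).powersetCard j))
      rw [Finset.card_powersetCard] at this
      exact_mod_cast this
    · push_neg at hjk
      set M := (C \ U).card with hM
      have hkM : k ≤ M := le_trans hjk hjM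
      have hkN : k ≤ C.card := le_trans hkM (Finset.card_le_card sdiff_subset)
      set Bs := (C.powersetCard k).filter (fun W => f W = 1) with hBs
      set FE := ((C \ U).powersetCard k).filter (fun S => IsFree k f (U ∪ S)) with hFE
      set bad := ((C \ U).powersetCard k).filter (fun S => ¬ IsFree k f (U ∪ S)) with hbad
      have hpart : FE.card + bad.card = M.choose k := by
        rw [hFE, hbad, Finset.card_filter_add_card_filter_not,
          Finset.card_powersetCard]
      have hkey := key_claim hk hU hfree hkM
      have hNpos : (0 : ℝ) < (C.card.choose k : ℝ) := by
        exact_mod_cast Nat.choose_pos hkN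
      have hFEbound : (FE.card : ℝ) ≤ (1 - ε') * (M.choose k) := by
        have hbad' : ε' * (M.choose k) ≤ (bad.card : ℝ) := by
          rw [hε, div_mul_eq_mul_div, div_le_iff₀ hNpos]
          calc (Bs.card : ℝ) * (M.choose k)
              ≤ (C.card.choose k : ℝ) * (bad.card) := hkey
            _ = (bad.card : ℝ) * (C.card.choose k) := by ring
        have : (FE.card : ℝ) + (bad.card : ℝ) = (M.choose k : ℝ) := by exact_mod_cast hpart
        nlinarith
      -- step counting
      have hstep := step_count (f := f) (C := C) (U := U) hjk
      have hIH : ∀ S ∈ FE,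
          ((((C \ (U ∪ S)).powersetCard (j - k)).filter
            (fun T => IsFree k f ((U ∪ S) ∪ T))).card : ℝ)
            ≤ (1 - ε') ^ ((j - k) / k) * ((M - k).choose (j - k)) := by
        intro S hS
        rw [hFE, mem_filter, mem_powersetCard] at hS
        obtain ⟨⟨hSsub, hSk⟩, hSfree⟩ := hS
        have hCU : C \ (U ∪ S) = (C \ U) \ S := by
          ext a; simp only [Finset.mem_sdiff, Finset.mem_union]; tauto
        have hMS : (C \ (U ∪ S)).card = M - k := by
          rw [hCU, Finset.card_sdiff_of_subset hSsub, hSk]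
        have hUS : U ∪ S ⊆ C := Finset.union_subset hU (hSsub.trans sdiff_subset)
        have := ih (j - k) (by omega) (U ∪ S) hUS hSfree (by rw [hMS]; omega)
        rw [hMS] at this
        exact this
      have hsum : ((∑ S ∈ FE,
          (((C \ (U ∪ S)).powersetCard (j - k)).filter
            (fun T => IsFree k f ((U ∪ S) ∪ T))).card : ℕ) : ℝ)
            ≤ (FE.card : ℝ) * ((1 - ε') ^ ((j - k) / k) * ((M - k).choose (j - k))) := by
        push_cast
        calc ∑ S ∈ FE, ((((C \ (U ∪ S)).powersetCard (j - k)).filter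
              (fun T => IsFree k f ((U ∪ S) ∪ T))).card : ℝ)
            ≤ ∑ _S ∈ FE, (1 - ε') ^ ((j - k) / k) * ((M - k).choose (j - k)) :=
              Finset.sum_le_sum hIH
          _ = (FE.card : ℝ) * ((1 - ε') ^ ((j - k) / k) * ((M - k).choose (j - k))) := by
              rw [Finset.sum_const, nsmul_eq_mul]
      have hchain : ((((C \ U).powersetCard j).filter
            (fun T => IsFree k f (U ∪ T))).card : ℝ) * (j.choose k)
          ≤ (1 - ε') ^ (j / k) * ((M.choose j : ℝ) * (j.choose k)) := by
        have hq : j / k = (j - k) / k + 1 := Nat.div_eq_sub_div hk hjk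
        have hid : (M.choose j : ℝ) * (j.choose k)
            = (M.choose k : ℝ) * ((M - k).choose (j - k)) := by
          have h2 := Nat.choose_mul (n := M) hjk
          exact_mod_cast congrArg (Nat.cast : ℕ → ℝ) h2
        calc ((((C \ U).powersetCard j).filter
              (fun T => IsFree k f (U ∪ T))).card : ℝ) * (j.choose k)
            ≤ (FE.card : ℝ) * ((1 - ε') ^ ((j - k) / k) * ((M - k).choose (j - k))) := by
              refine le_trans ?_ hsum
              exact_mod_cast hstep
          _ ≤ ((1 - ε') * (M.choose k))
              * ((1 - ε') ^ ((j - k) / k) * ((M - k).choose (j - k))) := by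
              apply mul_le_mul_of_nonneg_right hFEbound
              exact mul_nonneg (pow_nonneg (by linarith) _) (Nat.cast_nonneg _)
          _ = (1 - ε') ^ ((j - k) / k + 1)
              * ((M.choose k : ℝ) * ((M - k).choose (j - k))) := by ring
          _ = (1 - ε') ^ (j / k) * ((M.choose j : ℝ) * (j.choose k)) := by
              rw [hq, hid]
      have hjkpos : (0 : ℝ) < (j.choose k : ℝ) := by
        exact_mod_cast Nat.choose_pos hjk
      exact le_of_mul_le_mul_right (hchain.trans_eq (by ring)) hjkpos

end Stmt5Aux

/-- The fraction of elements of the finite sample space `Ω` satisfying `p`,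
i.e. the probability of `p` under the uniform distribution on `Ω`. -/
noncomputable def prFrac {α : Type*} (Ω : Finset α) (p : α → Prop) : ℝ :=
  ((@Finset.filter α p (Classical.decPred p) Ω).card : ℝ) / (Ω.card : ℝ)

/-- The average of `f` over all size-`k` subsets of `T`. -/
noncomputable def avgk {α : Type*} (k : ℕ) (f : Finset α → ℝ) (T : Finset α) : ℝ :=
  (∑ S ∈ T.powersetCard k, f S) / (T.card.choose k : ℝ)

/-- Theorem 3 (concentration inequality for the realizable case): if
`A(f) ≥ ε`, then the probability that a uniformly random size-`n` subset `Υ`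
of `C` has empirical average `Â(f,Υ) = 0` is at most `exp(-⌊n/k⌋·ε)`. -/
theorem stmt_5 {α : Type*} (C : Finset α) (N k n : ℕ)
    (hN : C.card = N) (hk : 1 ≤ k) (hkn : k ≤ n) (hnN : n ≤ N)
    (f : Finset α → ℝ) (hf : ∀ S, f S = 0 ∨ f S = 1)
    (ε : ℝ) (hε : ε ∈ Set.Ioc (0 : ℝ) 1) (hA : avgk k f C ≥ ε) :
    prFrac (C.powersetCard n) (fun T => avgk k f T = 0)
      ≤ Real.exp (-(((n / k : ℕ) : ℝ) * ε)) := by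
  classical
  open Stmt5Aux in
  letI : DecidableEq α := Classical.decEq α
  set m := n / k with hm
  have hnC : n ≤ C.card := by omega
  have hkC : k ≤ C.card := le_trans hkn hnC
  have hchoosenpos : (0 : ℝ) < (C.card.choose n : ℝ) := by
    exact_mod_cast Nat.choose_pos hnC
  have hchoosekpos : (0 : ℝ) < (C.card.choose k : ℝ) := by
    exact_mod_cast Nat.choose_pos hkC
  set Bs := (C.powersetCard k).filter (fun W => f W = 1) with hBs
  set ε' : ℝ := (Bs.card : ℝ) / (C.card.choose k) with hε'
  -- `avgk k f C = ε'`
  have hsum : ∑ S ∈ C.powersetCard k, f S = (Bs.card : ℝ) := by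
    rw [hBs, ← Finset.sum_boole]
    apply Finset.sum_congr rfl
    intro S _
    rcases hf S with h | h <;> simp [h]
  have havg : avgk k f C = ε' := by
    rw [avgk, hsum, hε']
  have hεε' : ε ≤ ε' := by rw [← havg]; exact hA
  have hε'le1 : ε' ≤ 1 := by
    rw [hε', div_le_one hchoosekpos]
    have := Finset.card_le_card (Finset.filter_subset (fun W => f W = 1) (C.powersetCard k))
    rw [Finset.card_powersetCard] at this
    exact_mod_cast this
  -- the event is contained in the set of free `n`-subsets
  have hfree_empty : Stmt5Aux.IsFree k f ∅ := by
    intro S hS hc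
    have : S = ∅ := Finset.subset_empty.1 hS
    rw [this] at hc
    simp at hc
    omega
  have hmain := Stmt5Aux.main_ind (f := f) (C := C) hk rfl n ∅ (Finset.empty_subset C)
      hfree_empty (by rw [Finset.sdiff_empty]; exact hnC)
  simp only [Finset.sdiff_empty, Finset.empty_union] at hmain
  have hsubset : (C.powersetCard n).filter (fun T => avgk k f T = 0)
      ⊆ (C.powersetCard n).filter (fun T => Stmt5Aux.IsFree k f T) := by
    intro T hT
    rw [Finset.mem_filter] at hT ⊢
    obtain ⟨hTm, hT0⟩ := hT
    refine ⟨hTm, ?_⟩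
    obtain ⟨hTsub, hTcard⟩ := Finset.mem_powersetCard.1 hTm
    have hnk0 : (T.card.choose k : ℝ) ≠ 0 := by
      rw [hTcard]
      exact_mod_cast (Nat.choose_pos hkn).ne'
    have hsum0 : ∑ S ∈ T.powersetCard k, f S = 0 := by
      rw [avgk, div_eq_zero_iff] at hT0
      tauto
    have hnonneg : ∀ S ∈ T.powersetCard k, 0 ≤ f S := by
      intro S _
      rcases hf S with h | h <;> rw [h] <;> norm_num
    have hzero := (Finset.sum_eq_zero_iff_of_nonneg hnonneg).1 hsum0
    intro S hS hc
    exact hzero S (Finset.mem_powersetCard.2 ⟨hS, hc⟩)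
  -- assemble
  rw [prFrac]
  rw [Finset.card_powersetCard]
  have hfilter_eq : (@Finset.filter _ (fun T => avgk k f T = 0)
        (Classical.decPred _) (C.powersetCard n))
      = (C.powersetCard n).filter (fun T => avgk k f T = 0) := by
    apply Finset.filter_congr_decidable
  rw [hfilter_eq]
  have hcard1 : (((C.powersetCard n).filter (fun T => avgk k f T = 0)).card : ℝ)
      ≤ (((C.powersetCard n).filter (fun T => Stmt5Aux.IsFree k f T)).card : ℝ) := by
    exact_mod_cast Finset.card_le_card hsubset
  have h1ε'0 : (0:ℝ) ≤ 1 - ε' := by linarith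
  have hexp : (1 - ε') ^ m ≤ Real.exp (-((m : ℝ) * ε)) := by
    have h1 : (1 - ε') ^ m ≤ (1 - ε) ^ m :=
      pow_le_pow_left₀ h1ε'0 (by linarith) m
    have h2 : (1 - ε) ^ m ≤ Real.exp (-ε) ^ m := by
      apply pow_le_pow_left₀ (by linarith [hε.2])
      linarith [Real.add_one_le_exp (-ε)]
    have h3 : Real.exp (-ε) ^ m = Real.exp (-((m : ℝ) * ε)) := by
      rw [← Real.exp_nat_mul]
      ring_nf
    linarith
  rw [div_le_iff₀ hchoosenpos]
  calc (((C.powersetCard n).filter (fun T => avgk k f T = 0)).card : ℝ)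
      ≤ (((C.powersetCard n).filter (fun T => Stmt5Aux.IsFree k f T)).card : ℝ) := hcard1
    _ ≤ (1 - ε') ^ m * (C.card.choose n : ℝ) := hmain
    _ ≤ Real.exp (-((m : ℝ) * ε)) * (C.card.choose n : ℝ) := by
        apply mul_le_mul_of_nonneg_right hexp (le_of_lt hchoosenpos)
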